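/- If a discrete set Y ⊂ ℝ is BD-equivalent to a lattice αℤ (α > 0), then Y has density α⁻¹: that is, #(Y ∩ [−T, T])/(2T) → α⁻¹ as T → ∞. -/
import Mathlib


/-- Two subsets of ℝ are bounded-displacement (BD) equivalent if there is a
bijection between them moving every point a uniformly bounded distance. -/
def BDEquiv (Y₁ Y₂ : Set ℝ) : Prop :=
  ∃ φ : Y₁ ≃ Y₂, ∃ M : ℝ, ∀ y : Y₁, |(y : ℝ) - (φ y : ℝ)| ≤ M

lemma intIcc_card (b : ℤ) (hb : 0 ≤ b) :
    (Nat.card (Set.Icc (-b) b) : ℝ) = 2 * (b : ℝ) + 1 := by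
  rw [Nat.card_eq_card_toFinset, Set.toFinset_Icc, Int.card_Icc]
  have : (b + 1 - (-b)) = 2 * b + 1 := by ring
  have h : (0:ℤ) ≤ 2 * b + 1 := by omega
  rw [this, ← Int.cast_natCast (R := ℝ), Int.toNat_of_nonneg h]
  push_cast
  ring

/-- Density is a BD invariant: if a discrete (locally finite) set `Y ⊆ ℝ` is
BD-equivalent to the lattice `αℤ` with `α > 0`, then `Y` has density `α⁻¹`:
`#(Y ∩ [−T,T])/(2T) → α⁻¹` as `T → ∞`. -/
theorem BD_lattice_density (Y : Set ℝ) (α : ℝ) (hα : 0 < α)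
    (hfin : ∀ s t : ℝ, (Y ∩ Set.Icc s t).Finite)
    (hBD : BDEquiv Y {x : ℝ | ∃ n : ℤ, x = α * n}) :
    Filter.Tendsto
      (fun T : ℝ => (Nat.card ↥(Y ∩ Set.Icc (-T) T) : ℝ) / (2 * T))
      Filter.atTop (nhds α⁻¹) := by
  obtain ⟨φ, M₀, hM₀⟩ := hBD
  set M := max M₀ 0 with hMdef
  have hM0 : (0:ℝ) ≤ M := le_max_right _ _
  have hM : ∀ y : Y, |(y : ℝ) - (φ y : ℝ)| ≤ M := fun y => (hM₀ y).trans (le_max_left _ _)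
  -- the cardinality of Y ∩ [-T,T]
  let C : ℝ → ℝ := fun T => (Nat.card ↥(Y ∩ Set.Icc (-T) T) : ℝ)
  -- upper bound
  have upper : ∀ T : ℝ, M ≤ T → C T ≤ 2 * ((T + M) / α) + 1 := by
    intro T hT
    set b : ℤ := ⌊(T + M) / α⌋ with hb
    have hb0 : (0:ℤ) ≤ b := by
      apply Int.floor_nonneg.mpr
      exact div_nonneg (by linarith) hα.le
    -- injection from Y ∩ Icc into Set.Icc (-b) b
    have hinj : ∃ f : ↥(Y ∩ Set.Icc (-T) T) → ↥(Set.Icc (-b) b),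
        Function.Injective f := by
      refine ⟨fun y => ⟨(φ ⟨(y:ℝ), y.2.1⟩).2.choose, ?_⟩, ?_⟩
      · set yY : Y := ⟨(y:ℝ), y.2.1⟩ with hyY
        set n : ℤ := (φ yY).2.choose with hn
        have hspec : ((φ yY : ℝ)) = α * n := (φ yY).2.choose_spec
        have h1 : |(yY : ℝ) - (φ yY : ℝ)| ≤ M := hM yY
        have h2 : |(yY : ℝ)| ≤ T := abs_le.mpr ⟨y.2.2.1, y.2.2.2⟩
        have h3 : |(φ yY : ℝ)| ≤ T + M := by
          have := abs_sub_abs_le_abs_sub (φ yY : ℝ) (yY : ℝ)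
          rw [abs_sub_comm] at this
          linarith
        rw [hspec, abs_mul, abs_of_pos hα] at h3
        have h4 : |(n:ℝ)| ≤ (T + M) / α := by
          rw [le_div_iff₀ hα]; linarith [h3]
        have h5 : (n:ℝ) ≤ (T + M) / α := (le_abs_self _).trans h4
        have h6 : -(n:ℝ) ≤ (T + M) / α := (neg_le_abs _).trans h4
        constructor
        · have : -n ≤ b := Int.le_floor.mpr (by push_cast; linarith)
          omega
        · exact Int.le_floor.mpr h5
      · intro y₁ y₂ h
        have hspec1 : ((φ ⟨(y₁:ℝ), y₁.2.1⟩ : ℝ)) = α * (φ ⟨(y₁:ℝ), y₁.2.1⟩).2.choose :=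
          (φ ⟨(y₁:ℝ), y₁.2.1⟩).2.choose_spec
        have hspec2 : ((φ ⟨(y₂:ℝ), y₂.2.1⟩ : ℝ)) = α * (φ ⟨(y₂:ℝ), y₂.2.1⟩).2.choose :=
          (φ ⟨(y₂:ℝ), y₂.2.1⟩).2.choose_spec
        have hnn : (φ ⟨(y₁:ℝ), y₁.2.1⟩).2.choose = (φ ⟨(y₂:ℝ), y₂.2.1⟩).2.choose :=
          Subtype.ext_iff.mp h
        have hval : ((φ ⟨(y₁:ℝ), y₁.2.1⟩ : ℝ)) = ((φ ⟨(y₂:ℝ), y₂.2.1⟩ : ℝ)) := by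
          rw [hspec1, hspec2, hnn]
        have : φ ⟨(y₁:ℝ), y₁.2.1⟩ = φ ⟨(y₂:ℝ), y₂.2.1⟩ := Subtype.ext hval
        have hyy : ((⟨(y₁:ℝ), y₁.2.1⟩ : Y) : ℝ) = ((⟨(y₂:ℝ), y₂.2.1⟩ : Y) : ℝ) :=
          Subtype.ext_iff.mp (φ.injective this)
        exact Subtype.ext hyy
    obtain ⟨f, hf⟩ := hinj
    have hcard : Nat.card ↥(Y ∩ Set.Icc (-T) T) ≤ Nat.card ↥(Set.Icc (-b) b) :=
      Nat.card_le_card_of_injective f hf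
    have hcR : C T ≤ (Nat.card ↥(Set.Icc (-b) b) : ℝ) := by
      show (Nat.card ↥(Y ∩ Set.Icc (-T) T) : ℝ) ≤ _
      exact_mod_cast hcard
    rw [intIcc_card b hb0] at hcR
    have hfl : (b : ℝ) ≤ (T + M) / α := Int.floor_le _
    linarith
  -- lower bound
  have lower : ∀ T : ℝ, M ≤ T → 2 * ((T - M) / α) - 1 ≤ C T := by
    intro T hT
    set a : ℤ := ⌊(T - M) / α⌋ with ha
    have ha0 : (0:ℤ) ≤ a := by
      apply Int.floor_nonneg.mpr
      have : (0:ℝ) ≤ T - M := by linarith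
      positivity
    have hmem : ∀ n : ℤ, n ∈ Set.Icc (-a) a →
        ((φ.symm ⟨α * n, ⟨n, rfl⟩⟩ : ℝ)) ∈ Y ∩ Set.Icc (-T) T := by
      intro n hn
      set x : ↥{x : ℝ | ∃ m : ℤ, x = α * m} := ⟨α * n, ⟨n, rfl⟩⟩ with hx
      set y : ↥Y := φ.symm x with hy
      refine ⟨y.2, ?_⟩
      have h1 : |(y : ℝ) - (φ y : ℝ)| ≤ M := hM y
      have h2 : φ y = x := by rw [hy, Equiv.apply_symm_apply]
      rw [h2] at h1
      have hna : |(n:ℝ)| ≤ (a : ℝ) := by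
        rw [abs_le]; constructor <;> [exact_mod_cast hn.1; exact_mod_cast hn.2]
      have hxb : |(x : ℝ)| ≤ T - M := by
        show |α * n| ≤ T - M
        rw [abs_mul, abs_of_pos hα]
        calc α * |(n:ℝ)| ≤ α * ((T - M) / α) := by
              apply mul_le_mul_of_nonneg_left _ hα.le
              exact hna.trans (Int.floor_le _)
          _ = T - M := by field_simp
      have hyb : |(y:ℝ)| ≤ T := by
        have := abs_sub_abs_le_abs_sub (y : ℝ) (x : ℝ)
        linarith
      rw [Set.mem_Icc]
      exact ⟨neg_le_of_abs_le hyb, le_of_abs_le hyb⟩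
    have hinj : ∃ g : ↥(Set.Icc (-a) a) → ↥(Y ∩ Set.Icc (-T) T),
        Function.Injective g := by
      refine ⟨fun n => ⟨(φ.symm ⟨α * n, ⟨n, rfl⟩⟩ : ℝ), hmem n n.2⟩, ?_⟩
      intro n₁ n₂ h
      have hval := Subtype.ext_iff.mp h
      have : φ.symm ⟨α * (n₁:ℤ), ⟨n₁, rfl⟩⟩ = φ.symm ⟨α * (n₂:ℤ), ⟨n₂, rfl⟩⟩ :=
        Subtype.ext hval
      have hx : (⟨α * (n₁:ℤ), ⟨n₁, rfl⟩⟩ : ↥{x : ℝ | ∃ m : ℤ, x = α * m}) =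
          ⟨α * (n₂:ℤ), ⟨n₂, rfl⟩⟩ := φ.symm.injective this
      have hreal : α * ((n₁:ℤ):ℝ) = α * ((n₂:ℤ):ℝ) := congrArg Subtype.val hx
      have : ((n₁:ℤ):ℝ) = ((n₂:ℤ):ℝ) := mul_left_cancel₀ hα.ne' hreal
      exact Subtype.ext (by exact_mod_cast this)
    obtain ⟨g, hg⟩ := hinj
    have : Finite ↥(Y ∩ Set.Icc (-T) T) := (hfin (-T) T).to_subtype
    have hcard : Nat.card ↥(Set.Icc (-a) a) ≤ Nat.card ↥(Y ∩ Set.Icc (-T) T) :=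
      Nat.card_le_card_of_injective g hg
    have hcR : (Nat.card ↥(Set.Icc (-a) a) : ℝ) ≤ C T := by
      show _ ≤ (Nat.card ↥(Y ∩ Set.Icc (-T) T) : ℝ)
      exact_mod_cast hcard
    rw [intIcc_card a ha0] at hcR
    have hfl : (T - M) / α - 1 < (a : ℝ) := Int.sub_one_lt_floor _
    linarith
  -- squeeze
  have hlim : ∀ c : ℝ, Filter.Tendsto (fun T : ℝ => α⁻¹ + c * T⁻¹)
      Filter.atTop (nhds α⁻¹) := by
    intro c
    have h1 : Filter.Tendsto (fun T : ℝ => c * T⁻¹) Filter.atTop (nhds 0) := by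
      have := tendsto_inv_atTop_zero.const_mul c
      simpa using this
    have := h1.const_add α⁻¹
    simpa using this
  refine tendsto_of_tendsto_of_tendsto_of_le_of_le'
    (hlim (-(2 * M / α + 1) / 2)) (hlim ((2 * M / α + 1) / 2)) ?_ ?_
  · filter_upwards [Filter.eventually_ge_atTop (max M 1)] with T hT
    have hT1 : (1:ℝ) ≤ T := le_trans (le_max_right _ _) hT
    have hTM : M ≤ T := le_trans (le_max_left _ _) hT
    have hTpos : (0:ℝ) < T := by linarith
    have h := lower T hTM
    have heq : α⁻¹ + -(2 * M / α + 1) / 2 * T⁻¹ = (2 * ((T - M) / α) - 1) / (2 * T) := by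
      field_simp
      ring
    rw [heq]
    gcongr
  · filter_upwards [Filter.eventually_ge_atTop (max M 1)] with T hT
    have hT1 : (1:ℝ) ≤ T := le_trans (le_max_right _ _) hT
    have hTM : M ≤ T := le_trans (le_max_left _ _) hT
    have hTpos : (0:ℝ) < T := by linarith
    have h := upper T hTM
    have heq : α⁻¹ + (2 * M / α + 1) / 2 * T⁻¹ = (2 * ((T + M) / α) + 1) / (2 * T) := by
      field_simp
      ring
    rw [heq]
    gcongr
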